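/- Let Λ and Π be orthogonal projectors on a finite-dimensional Hilbert space whose ranges satisfy ΛH ∩ (ΠH)^⊥ = {0} and (ΛH)^⊥ ∩ ΠH = {0}. Then the Moore–Penrose inverse Q of ΛΠ satisfies Q² = Q, Q(H) = Π(H), and ker Q = ker Λ. -/

import Mathlib

open Matrix

private lemma toEuclideanLin_mul' {n : ℕ} (M N : Matrix (Fin n) (Fin n) ℂ) :
    Matrix.toEuclideanLin (M * N) =
      (Matrix.toEuclideanLin M) ∘ₗ (Matrix.toEuclideanLin N) := by
  apply LinearMap.ext
  intro v
  simp [Matrix.toEuclideanLin_apply, Matrix.mulVec_mulVec]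

/-- If `Λ, Π` are orthogonal projectors with skew ranges, then the Moore–Penrose inverse `Q`
of `ΛΠ` satisfies `Q² = Q`, `ran Q = ran Π`, and `ker Q = ker Λ`. -/
theorem stmt_9 {n : ℕ} (L P Q : Matrix (Fin n) (Fin n) ℂ)
    (hLh : Lᴴ = L) (hLi : L * L = L) (hPh : Pᴴ = P) (hPi : P * P = P)
    (hskew1 : LinearMap.range (Matrix.toEuclideanLin L)
        ⊓ (LinearMap.range (Matrix.toEuclideanLin P))ᗮ = ⊥)
    (hskew2 : (LinearMap.range (Matrix.toEuclideanLin L))ᗮ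
        ⊓ LinearMap.range (Matrix.toEuclideanLin P) = ⊥)
    (hmp1 : (L * P) * Q * (L * P) = L * P) (hmp2 : Q * (L * P) * Q = Q)
    (hmp3 : ((L * P) * Q)ᴴ = (L * P) * Q) (hmp4 : (Q * (L * P))ᴴ = Q * (L * P)) :
    Q * Q = Q
    ∧ LinearMap.range (Matrix.toEuclideanLin Q) = LinearMap.range (Matrix.toEuclideanLin P)
    ∧ LinearMap.ker (Matrix.toEuclideanLin Q) = LinearMap.ker (Matrix.toEuclideanLin L) := by
  have hAh : (L * P)ᴴ = P * L := by rw [conjTranspose_mul, hLh, hPh]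
  -- basic conjugations of the MP identities
  have hQA : Q * (L * P) = P * L * Qᴴ := by
    rw [← hmp4, conjTranspose_mul, hAh]
  have hAQ : (L * P) * Q = Qᴴ * (P * L) := by
    rw [← hmp3, conjTranspose_mul, hAh]
  have hQ1 : Q = P * L * Qᴴ * Q := by
    calc Q = Q * (L * P) * Q := hmp2.symm
    _ = P * L * Qᴴ * Q := by rw [hQA]
  have hQ2 : Q = Q * (Qᴴ * (P * L)) := by
    conv_lhs => rw [← hmp2]
    rw [Matrix.mul_assoc, hAQ]
  have hPQ : P * Q = Q := by
    conv_lhs => rw [hQ1]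
    rw [show P * (P * L * Qᴴ * Q) = (P * P) * L * Qᴴ * Q from by
      simp only [Matrix.mul_assoc], hPi, ← hQ1]
  have hQL : Q * L = Q := by
    conv_lhs => rw [hQ2]
    rw [show Q * (Qᴴ * (P * L)) * L = Q * (Qᴴ * (P * (L * L))) from by
      simp only [Matrix.mul_assoc], hLi, ← hQ2]
  have hQQ : Q * Q = Q := by
    calc Q * Q = (Q * L) * (P * Q) := by rw [hQL, hPQ]
    _ = Q * (L * P) * Q := by simp only [Matrix.mul_assoc]
    _ = Q := hmp2
  -- conjugate of hmp1
  have hPLP : (P * L) * ((L * P) * Q) = P * L := by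
    have h := congrArg conjTranspose hmp1
    simp only [conjTranspose_mul, hLh, hPh, Matrix.mul_assoc] at h
    rw [hAQ]
    simpa only [Matrix.mul_assoc] using h
  -- matrix identities controlling range and kernel of Q
  have hM1 : Q = (P * L) * (Qᴴ * Q) := by
    rw [← Matrix.mul_assoc, ← hQ1]
  have hM2 : P * L = Q * ((L * P) * (P * L)) := by
    calc P * L = (P * L) * ((L * P) * Q) := hPLP.symm
    _ = (P * L) * (Qᴴ * (P * L)) := by rw [hAQ]
    _ = ((P * L) * Qᴴ) * (P * L) := by simp only [Matrix.mul_assoc]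
    _ = (Q * (L * P)) * (P * L) := by rw [hQA]
    _ = Q * ((L * P) * (P * L)) := by simp only [Matrix.mul_assoc]
  have hM3 : Q = (Q * Qᴴ) * (P * L) := by
    rw [Matrix.mul_assoc, ← hQ2]
  have hM4 : P * L = ((P * L) * (L * P)) * Q := by
    rw [Matrix.mul_assoc, hPLP]
  -- move to linear maps
  set l := Matrix.toEuclideanLin L with hl
  set p := Matrix.toEuclideanLin P with hp
  set q := Matrix.toEuclideanLin Q with hq
  have hcomp : Matrix.toEuclideanLin (P * L) = p ∘ₗ l := toEuclideanLin_mul' P L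
  have hpadj : LinearMap.adjoint p = p := by
    rw [hp, ← Matrix.toEuclideanLin_conjTranspose_eq_adjoint, hPh]
  have hpp : p ∘ₗ p = p := by rw [hp, ← toEuclideanLin_mul', hPi]
  have hfix : ∀ x ∈ LinearMap.range p, p x = x := by
    rintro x ⟨y, rfl⟩
    calc p (p y) = (p ∘ₗ p) y := rfl
    _ = p y := by rw [hpp]
  -- range (p ∘ l) = range p
  have hrle : LinearMap.range (p ∘ₗ l) ≤ LinearMap.range p :=
    LinearMap.range_comp_le_range l p
  have hinf : (LinearMap.range (p ∘ₗ l))ᗮ ⊓ LinearMap.range p = ⊥ := by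
    rw [eq_bot_iff]
    rintro x ⟨hx1, hx2⟩
    have hxl : x ∈ (LinearMap.range l)ᗮ := by
      rw [Submodule.mem_orthogonal]
      rintro u ⟨y, rfl⟩
      have h0 : inner ℂ ((p ∘ₗ l) y) x = (0 : ℂ) :=
        (Submodule.mem_orthogonal _ _).mp hx1 _ ⟨y, rfl⟩
      calc inner ℂ (l y) x = inner ℂ (l y) (p x) := by rw [hfix x hx2]
      _ = inner ℂ (LinearMap.adjoint p (l y)) x := (LinearMap.adjoint_inner_left p _ _).symm
      _ = inner ℂ ((p ∘ₗ l) y) x := by rw [hpadj]; rfl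
      _ = 0 := h0
    have : x ∈ (LinearMap.range l)ᗮ ⊓ LinearMap.range p := ⟨hxl, hx2⟩
    rwa [hskew2] at this
  have hranPL : LinearMap.range (p ∘ₗ l) = LinearMap.range p := by
    have hsup := Submodule.sup_orthogonal_inf_of_hasOrthogonalProjection hrle
    rwa [hinf, sup_bot_eq] at hsup
  -- ker (p ∘ l) = ker l
  have hkerPL : LinearMap.ker (p ∘ₗ l) = LinearMap.ker l := by
    apply le_antisymm
    · intro x hx
      have hx' : p (l x) = 0 := hx
      have hmem : l x ∈ LinearMap.range l ⊓ (LinearMap.range p)ᗮ := by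
        refine ⟨⟨x, rfl⟩, (Submodule.mem_orthogonal _ _).mpr ?_⟩
        rintro u ⟨y, rfl⟩
        calc inner ℂ (p y) (l x) = inner ℂ (LinearMap.adjoint p y) (l x) := by rw [hpadj]
        _ = inner ℂ y (p (l x)) := LinearMap.adjoint_inner_left p _ _
        _ = 0 := by rw [hx', inner_zero_right]
      rw [hskew1] at hmem
      simpa [LinearMap.mem_ker] using hmem
    · intro x hx
      have hx' : l x = 0 := hx
      show p (l x) = 0
      rw [hx', map_zero]
  -- range q = range (p ∘ l)
  have eq1 : q = (p ∘ₗ l) ∘ₗ Matrix.toEuclideanLin (Qᴴ * Q) := by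
    rw [hq, ← hcomp, ← toEuclideanLin_mul', ← hM1]
  have eq2 : p ∘ₗ l = q ∘ₗ Matrix.toEuclideanLin ((L * P) * (P * L)) := by
    rw [hq, ← hcomp, ← toEuclideanLin_mul', ← hM2]
  have eq3 : q = Matrix.toEuclideanLin (Q * Qᴴ) ∘ₗ (p ∘ₗ l) := by
    rw [hq, ← hcomp, ← toEuclideanLin_mul', ← hM3]
  have eq4 : p ∘ₗ l = Matrix.toEuclideanLin ((P * L) * (L * P)) ∘ₗ q := by
    rw [hq, ← hcomp, ← toEuclideanLin_mul', ← hM4]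
  have hranQ : LinearMap.range q = LinearMap.range (p ∘ₗ l) := by
    apply le_antisymm
    · rw [eq1]; exact LinearMap.range_comp_le_range _ _
    · conv_lhs => rw [eq2]
      exact LinearMap.range_comp_le_range _ _
  have hkerQ : LinearMap.ker q = LinearMap.ker (p ∘ₗ l) := by
    apply le_antisymm
    · conv_rhs => rw [eq4]
      exact LinearMap.ker_le_ker_comp _ _
    · rw [eq3]; exact LinearMap.ker_le_ker_comp _ _
  exact ⟨hQQ, hranQ.trans hranPL, hkerQ.trans hkerPL⟩
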